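/- Let G be a finite simple undirected graph with threshold function τ : V(G) → ℕ satisfying τ(v) ≥ 1 for every vertex v, let B ⊆ V(G) be an independent set of G, and let S ⊆ V(G) be a seed set. For i ≥ 0, if the set of vertices newly activated in round i+1, namely A[S,i+1] \ A[S,i], is contained in B, then the set of vertices newly activated in round i+2, namely A[S,i+2] \ A[S,i+1], is disjoint from B; in particular, A[S,i+2] \ A[S,i+1] ⊆ V(G) \ B. -/
import Mathlib


open scoped Classical

/-- The neighborhood of `u` in `G`, as a finset. -/
noncomputable def nbrs {V : Type*} [Fintype V] (G : SimpleGraph V) (u : V) : Finset V :=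
  Finset.univ.filter (fun w => G.Adj u w)

/-- The diffusion process: `diffusion G τ S i` is the set `A[S,i]` of vertices
active after `i` rounds starting from seed set `S`. -/
noncomputable def diffusion {V : Type*} [Fintype V] (G : SimpleGraph V) (τ : V → ℕ)
    (S : Finset V) : ℕ → Finset V
  | 0 => S
  | (i + 1) => diffusion G τ S i ∪
      Finset.univ.filter (fun u => τ u ≤ (nbrs G u ∩ diffusion G τ S i).card)

/-- The influence of a seed set `S`: all vertices eventually activated. -/
def influence {V : Type*} [Fintype V] (G : SimpleGraph V) (τ : V → ℕ) (S : Finset V) : Set V :=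
  {v | ∃ i, v ∈ diffusion G τ S i}

/-- `S` is a target set if its influence is the whole vertex set. -/
def isTargetSet {V : Type*} [Fintype V] (G : SimpleGraph V) (τ : V → ℕ) (S : Finset V) : Prop :=
  influence G τ S = Set.univ

/-- `C` is a vertex cover of `G`. -/
def isVertexCover {V : Type*} [Fintype V] (G : SimpleGraph V) (C : Finset V) : Prop :=
  ∀ u v, G.Adj u v → u ∈ C ∨ v ∈ C

/-- If all vertices newly activated in round `i+1` lie in an independent set `B`,
then no vertex newly activated in round `i+2` lies in `B` (thresholds at least 1). -/
lemma mem_diffusion_succ {V : Type*} [Fintype V] (G : SimpleGraph V) (τ : V → ℕ)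
    (S : Finset V) (n : ℕ) (v : V) :
    v ∈ diffusion G τ S (n + 1) ↔
      v ∈ diffusion G τ S n ∨ τ v ≤ (nbrs G v ∩ diffusion G τ S n).card := by
  simp [diffusion]

theorem newly_activated_alternate {V : Type*} [Fintype V] (G : SimpleGraph V) (τ : V → ℕ)
    (hτ : ∀ v, 1 ≤ τ v)
    (B : Finset V) (hB : ∀ u ∈ B, ∀ v ∈ B, ¬ G.Adj u v)
    (S : Finset V) (i : ℕ)
    (h : ∀ v ∈ diffusion G τ S (i + 1), v ∉ diffusion G τ S i → v ∈ B) :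
    ∀ v ∈ diffusion G τ S (i + 2), v ∉ diffusion G τ S (i + 1) → v ∉ B := by
  intro v hv2 hv1 hvB
  -- v is activated at round i+2 by its neighbors in A(i+1)
  have hv2' : τ v ≤ (nbrs G v ∩ diffusion G τ S (i + 1)).card := by
    rcases (mem_diffusion_succ G τ S (i + 1) v).mp hv2 with h' | h'
    · exact absurd h' hv1
    · exact h'
  -- not activated at round i+1
  have hv1' : ¬ τ v ≤ (nbrs G v ∩ diffusion G τ S i).card := by
    intro hle
    exact hv1 ((mem_diffusion_succ G τ S i v).mpr (Or.inr hle))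
  -- so some neighbor w ∈ A(i+1) \ A(i)
  have hcard : (nbrs G v ∩ diffusion G τ S i).card < (nbrs G v ∩ diffusion G τ S (i + 1)).card :=
    lt_of_lt_of_le (Nat.lt_of_not_le hv1') hv2'
  have hsub : nbrs G v ∩ diffusion G τ S i ⊆ nbrs G v ∩ diffusion G τ S (i + 1) := by
    apply Finset.inter_subset_inter_left
    intro x hx
    exact (mem_diffusion_succ G τ S i x).mpr (Or.inl hx)
  obtain ⟨w, hw1, hw0⟩ : ∃ w ∈ nbrs G v ∩ diffusion G τ S (i + 1),
      w ∉ nbrs G v ∩ diffusion G τ S i := by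
    by_contra hc
    push_neg at hc
    exact absurd (Finset.card_le_card hc) (Nat.not_le_of_lt hcard)
  rw [Finset.mem_inter] at hw1
  have hwn : w ∉ diffusion G τ S i := fun hw => hw0 (Finset.mem_inter.mpr ⟨hw1.1, hw⟩)
  have hwB : w ∈ B := h w hw1.2 hwn
  have hadj : G.Adj v w := by
    have := hw1.1
    simp only [nbrs, Finset.mem_filter] at this
    exact this.2
  exact hB v hvB w hwB hadj
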